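/- arXiv:1402.5833 — 4 statements merged into one kernel-verified Lean document; each statement's English description precedes it below -/
import Mathlib

section
/- The image of SL(2,ℝ) under the homomorphism L equals the proper orthochronous Lorentz group SO₀(2,1). Concretely: for every g ∈ SL(2,ℝ), the linear map L(g) on ℝ³ satisfies η(L(g)u) = η(u) for all u, det L(g) = 1, and the (t,t) matrix entry of L(g) (the entry ⟨L(g)e₃, e₃⟩ in coordinates (x,y,t)) is positive; conversely, every 3×3 real matrix M with η(Mu) = η(u) for all u ∈ ℝ³, det M = 1, and M₃₃ > 0 equals L(g) for some g ∈ SL(2,ℝ). -/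
open Matrix

noncomputable def phi (u : Fin 3 → ℝ) : Matrix (Fin 2) (Fin 2) ℝ :=
  !![u 2 + u 0, u 1; u 1, u 2 - u 0]

noncomputable def phiInv (σ : Matrix (Fin 2) (Fin 2) ℝ) : Fin 3 → ℝ :=
  ![(σ 0 0 - σ 1 1) / 2, σ 0 1, (σ 0 0 + σ 1 1) / 2]

noncomputable def Lmap (g : Matrix (Fin 2) (Fin 2) ℝ) (u : Fin 3 → ℝ) : Fin 3 → ℝ :=
  phiInv ((g⁻¹)ᵀ * phi u * g⁻¹)

noncomputable def Lmat (g : Matrix (Fin 2) (Fin 2) ℝ) : Matrix (Fin 3) (Fin 3) ℝ :=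
  Matrix.of fun i j => Lmap g (Pi.single j 1) i

noncomputable def eta (u : Fin 3 → ℝ) : ℝ := (u 2) ^ 2 - (u 0) ^ 2 - (u 1) ^ 2

noncomputable def Cmat (h : Matrix (Fin 2) (Fin 2) ℝ) : Matrix (Fin 3) (Fin 3) ℝ :=
  Matrix.of fun i j => phiInv (hᵀ * phi (Pi.single j 1) * h) i

lemma Lmat_eq_Cmat (g : Matrix (Fin 2) (Fin 2) ℝ) : Lmat g = Cmat g⁻¹ := rfl

lemma Cmat_eq (h : Matrix (Fin 2) (Fin 2) ℝ) :
    Cmat h = !![(h 0 0^2 - h 1 0^2 - h 0 1^2 + h 1 1^2)/2, h 0 0*h 1 0 - h 0 1*h 1 1, (h 0 0^2 + h 1 0^2 - h 0 1^2 - h 1 1^2)/2;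
      h 0 0*h 0 1 - h 1 0*h 1 1, h 0 0*h 1 1 + h 0 1*h 1 0, h 0 0*h 0 1 + h 1 0*h 1 1;
      (h 0 0^2 - h 1 0^2 + h 0 1^2 - h 1 1^2)/2, h 0 0*h 1 0 + h 0 1*h 1 1, (h 0 0^2 + h 0 1^2 + h 1 0^2 + h 1 1^2)/2] := by
  ext i j
  fin_cases i <;> fin_cases j <;>
    simp [Cmat, phi, phiInv, Matrix.mul_apply, Fin.sum_univ_two, Pi.single_apply] <;> ring

lemma eta_Cmat (h : Matrix (Fin 2) (Fin 2) ℝ) (u : Fin 3 → ℝ) :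
    eta (Cmat h *ᵥ u) = (h.det)^2 * eta u := by
  rw [Cmat_eq, det_fin_two]
  simp [eta, mulVec, dotProduct, Fin.sum_univ_three]
  ring

lemma det_Cmat (h : Matrix (Fin 2) (Fin 2) ℝ) : (Cmat h).det = (h.det)^3 := by
  rw [Cmat_eq, det_fin_two]
  simp [det_fin_three]
  ring

lemma Cmat_mul (a b : Matrix (Fin 2) (Fin 2) ℝ) : Cmat (a * b) = Cmat b * Cmat a := by
  rw [Cmat_eq (a*b), Cmat_eq, Cmat_eq]
  ext i j
  fin_cases i <;> fin_cases j <;>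
    simp [Matrix.mul_apply, Fin.sum_univ_two, Fin.sum_univ_three] <;> ring

lemma Cmat_props (h : Matrix (Fin 2) (Fin 2) ℝ) (hh : h.det = 1) :
    (∀ u : Fin 3 → ℝ, eta (Cmat h *ᵥ u) = eta u) ∧ (Cmat h).det = 1 ∧ 0 < Cmat h 2 2 := by
  refine ⟨fun u => by rw [eta_Cmat, hh]; ring,
    by rw [det_Cmat, hh]; norm_num, ?_⟩
  have hd : h 0 0 * h 1 1 - h 0 1 * h 1 0 = 1 := by rw [← det_fin_two]; exact hh
  rw [Cmat_eq]
  simp only [Matrix.cons_val', Matrix.cons_val_zero, Matrix.cons_val_one, Matrix.head_cons,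
    Matrix.empty_val', Matrix.cons_val_fin_one, Matrix.head_fin_const, Matrix.of_apply,
    Matrix.cons_val_two, Matrix.tail_cons]
  nlinarith [sq_nonneg (h 0 0 - h 1 1), sq_nonneg (h 0 1 + h 1 0)]

lemma aux_bnd (x y : ℝ) (h : x^2 + y^2 = 1) : 0 ≤ (1 + x)/2 ∧ 0 ≤ (1 - x)/2 := by
  constructor <;> nlinarith [sq_nonneg (1 + x), sq_nonneg (1 - x), sq_nonneg y]

/-- the image of SL(2,ℝ) under L is exactly SO₀(2,1): for g ∈ SL(2,ℝ),
L(g) preserves η, has determinant 1 and positive (3,3) entry; conversely any such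
matrix is L(g) for some g ∈ SL(2,ℝ). -/
theorem stmt5 :
    (∀ g : Matrix (Fin 2) (Fin 2) ℝ, g.det = 1 →
      (∀ u : Fin 3 → ℝ, eta (Lmat g *ᵥ u) = eta u) ∧ (Lmat g).det = 1 ∧ 0 < Lmat g 2 2) ∧
    (∀ M : Matrix (Fin 3) (Fin 3) ℝ,
      (∀ u : Fin 3 → ℝ, eta (M *ᵥ u) = eta u) → M.det = 1 → 0 < M 2 2 →
      ∃ g : Matrix (Fin 2) (Fin 2) ℝ, g.det = 1 ∧ M = Lmat g) := by
  constructor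
  · intro g hg
    have hinv : g⁻¹.det = 1 := by rw [det_nonsing_inv, hg, Ring.inverse_one]
    rw [Lmat_eq_Cmat]
    exact Cmat_props _ hinv
  · intro M hMe hMd hM22
    -- notation
    have heta : M 2 2 ^ 2 - M 0 2 ^ 2 - M 1 2 ^ 2 = 1 := by
      have h := hMe (Pi.single 2 1)
      simp [eta, Pi.single_apply] at h
      linear_combination h
    have ht1 : (1:ℝ) ≤ M 2 2 := by nlinarith
    set a := M 0 2 with ha
    set b := M 1 2 with hb
    set t := M 2 2 with ht
    set k := Real.sqrt (2*t+2) with hk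
    have hk2 : k^2 = 2*t+2 := Real.sq_sqrt (by linarith)
    have hk0 : 0 < k := Real.sqrt_pos.mpr (by linarith)
    set h0 : Matrix (Fin 2) (Fin 2) ℝ := !![(t+a+1)/k, b/k; b/k, (t-a+1)/k] with hh0
    have hdh0 : h0.det = 1 := by
      rw [det_fin_two]
      simp only [hh0, Matrix.cons_val', Matrix.cons_val_zero, Matrix.cons_val_one,
        Matrix.head_cons, Matrix.empty_val', Matrix.cons_val_fin_one, Matrix.head_fin_const,
        Matrix.of_apply]
      field_simp
      linear_combination heta - hk2
    have entry : ∀ (i j : Fin 3), Cmat h0 i j =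
        !![(h0 0 0^2 - h0 1 0^2 - h0 0 1^2 + h0 1 1^2)/2, h0 0 0*h0 1 0 - h0 0 1*h0 1 1, (h0 0 0^2 + h0 1 0^2 - h0 0 1^2 - h0 1 1^2)/2;
          h0 0 0*h0 0 1 - h0 1 0*h0 1 1, h0 0 0*h0 1 1 + h0 0 1*h0 1 0, h0 0 0*h0 0 1 + h0 1 0*h0 1 1;
          (h0 0 0^2 - h0 1 0^2 + h0 0 1^2 - h0 1 1^2)/2, h0 0 0*h0 1 0 + h0 0 1*h0 1 1, (h0 0 0^2 + h0 0 1^2 + h0 1 0^2 + h0 1 1^2)/2] i j := by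
      intro i j; rw [Cmat_eq]
    have hcol0 : Cmat h0 0 2 = M 0 2 := by
      rw [entry]
      simp only [hh0, Matrix.cons_val', Matrix.cons_val_zero, Matrix.cons_val_one,
        Matrix.head_cons, Matrix.empty_val', Matrix.cons_val_fin_one, Matrix.head_fin_const,
        Matrix.of_apply, Matrix.cons_val_two, Matrix.tail_cons]
      rw [← ha]
      field_simp
      linear_combination (-2*a)*hk2
    have hcol1 : Cmat h0 1 2 = M 1 2 := by
      rw [entry]
      simp only [hh0, Matrix.cons_val', Matrix.cons_val_zero, Matrix.cons_val_one,
        Matrix.head_cons, Matrix.empty_val', Matrix.cons_val_fin_one, Matrix.head_fin_const,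
        Matrix.of_apply, Matrix.cons_val_two, Matrix.tail_cons]
      rw [← hb]
      field_simp
      linear_combination (-b)*hk2
    have hcol2 : Cmat h0 2 2 = M 2 2 := by
      rw [entry]
      simp only [hh0, Matrix.cons_val', Matrix.cons_val_zero, Matrix.cons_val_one,
        Matrix.head_cons, Matrix.empty_val', Matrix.cons_val_fin_one, Matrix.head_fin_const,
        Matrix.of_apply, Matrix.cons_val_two, Matrix.tail_cons]
      rw [← ht]
      field_simp
      linear_combination (-2*t)*hk2 - 2*heta
    have hcol : ∀ i, Cmat h0 i 2 = M i 2 := by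
      intro i; fin_cases i
      · exact hcol0
      · exact hcol1
      · exact hcol2
    have hCd : (Cmat h0).det = 1 := (Cmat_props _ hdh0).2.1
    have hCu : IsUnit (Cmat h0).det := by rw [hCd]; exact isUnit_one
    obtain ⟨N, hNdef⟩ : ∃ N, N = (Cmat h0)⁻¹ * M := ⟨_, rfl⟩
    have hMN : Cmat h0 * N = M := by
      rw [hNdef, ← mul_assoc, mul_nonsing_inv _ hCu, one_mul]
    have hNdet : N.det = 1 := by
      rw [hNdef, det_mul, det_nonsing_inv, hCd, hMd, Ring.inverse_one, one_mul]
    have hNe : ∀ u, eta (N *ᵥ u) = eta u := by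
      intro u
      have h := (Cmat_props _ hdh0).1 (N *ᵥ u)
      rw [mulVec_mulVec, hMN, hMe] at h
      exact h.symm
    have hNfix : N *ᵥ Pi.single 2 1 = Pi.single 2 1 := by
      have h1 : M *ᵥ Pi.single 2 1 = Cmat h0 *ᵥ Pi.single 2 1 := by
        funext i; simp [mulVec_single, hcol i]
      have h2 : N *ᵥ Pi.single 2 1 = ((Cmat h0)⁻¹ * Cmat h0) *ᵥ Pi.single 2 1 := by
        rw [hNdef, ← mulVec_mulVec, h1, mulVec_mulVec]
      rw [h2, nonsing_inv_mul _ hCu, one_mulVec]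
    have hN02 : N 0 2 = 0 := by simpa using congrFun hNfix 0
    have hN12 : N 1 2 = 0 := by simpa using congrFun hNfix 1
    have hN22 : N 2 2 = 1 := by simpa using congrFun hNfix 2
    have e1 : N 2 0^2 - N 0 0^2 - N 1 0^2 = -1 := by
      have h := hNe ![1,0,0]
      simp [eta, mulVec, dotProduct, Fin.sum_univ_three] at h
      linear_combination h
    have e2 : N 2 1^2 - N 0 1^2 - N 1 1^2 = -1 := by
      have h := hNe ![0,1,0]
      simp [eta, mulVec, dotProduct, Fin.sum_univ_three] at h
      linear_combination h
    have e3 : (N 2 0 + N 2 2)^2 - (N 0 0 + N 0 2)^2 - (N 1 0 + N 1 2)^2 = 0 := by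
      have h := hNe ![1,0,1]
      simp [eta, mulVec, dotProduct, Fin.sum_univ_three] at h
      linear_combination h
    have e4 : (N 2 1 + N 2 2)^2 - (N 0 1 + N 0 2)^2 - (N 1 1 + N 1 2)^2 = 0 := by
      have h := hNe ![0,1,1]
      simp [eta, mulVec, dotProduct, Fin.sum_univ_three] at h
      linear_combination h
    have e5 : (N 2 0 + N 2 1)^2 - (N 0 0 + N 0 1)^2 - (N 1 0 + N 1 1)^2 = -2 := by
      have h := hNe ![1,1,0]
      simp [eta, mulVec, dotProduct, Fin.sum_univ_three] at h
      linear_combination h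
    rw [hN02, hN12, hN22] at e3 e4
    have hN20 : N 2 0 = 0 := by linear_combination (e3 - e1)/2
    have hN21 : N 2 1 = 0 := by linear_combination (e4 - e2)/2
    have hcc : N 0 0^2 + N 1 0^2 = 1 := by
      linear_combination -e1 + N 2 0 * hN20
    have hdd : N 0 1^2 + N 1 1^2 = 1 := by
      linear_combination -e2 + N 2 1 * hN21
    have hof : N 0 0 * N 0 1 + N 1 0 * N 1 1 = 0 := by
      linear_combination (e1 + e2 - e5)/2 + (N 2 0 + N 2 1) * (hN20 + hN21) / 2 + (N 2 0 * hN20 + N 2 1 * hN21)/2 - N 2 0 * hN20 - N 2 1 * hN21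
    have hdet2 : N 0 0 * N 1 1 - N 0 1 * N 1 0 = 1 := by
      have h := hNdet
      rw [det_fin_three, hN02, hN12, hN22, hN20, hN21] at h
      linear_combination h
    have hf : N 1 1 = N 0 0 := by
      linear_combination -(N 1 1 * hcc) + N 0 0 * hdet2 + N 1 0 * hof
    have hd : N 0 1 = -(N 1 0) := by
      linear_combination -(N 0 1 * hcc) + N 0 0 * hof - N 1 0 * hdet2
    -- half angle
    have hc1 : 0 ≤ (1 + (N 0 0))/2 := (aux_bnd _ _ hcc).1
    have hc2 : 0 ≤ (1 - (N 0 0))/2 := (aux_bnd _ _ hcc).2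
    set c0 := Real.sqrt ((1 + (N 0 0))/2) with hc0def
    set sA := Real.sqrt ((1 - (N 0 0))/2) with hsAdef
    set s0 := if 0 ≤ (N 1 0) then sA else -sA with hs0def
    have hc02 : c0^2 = (1 + (N 0 0))/2 := Real.sq_sqrt hc1
    have hs02 : s0^2 = (1 - (N 0 0))/2 := by
      rw [hs0def]
      split
      · exact Real.sq_sqrt hc2
      · rw [neg_pow]; simp [Real.sq_sqrt hc2]; exact Real.sq_sqrt hc2
    have hprod : c0 * sA = |(N 1 0)| / 2 := by
      rw [hc0def, hsAdef, ← Real.sqrt_mul hc1]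
      have : (1 + (N 0 0))/2 * ((1 - (N 0 0))/2) = ((N 1 0)/2)^2 := by linear_combination -hcc/4
      rw [this, Real.sqrt_sq_eq_abs, abs_div]
      norm_num
    have h2cs : 2 * (c0 * s0) = (N 1 0) := by
      rw [hs0def]
      split
      · next h => rw [hprod, abs_of_nonneg h]; ring
      · next h =>
          rw [mul_neg, hprod, abs_of_neg (lt_of_not_ge h)]; ring
    set ρ : Matrix (Fin 2) (Fin 2) ℝ := !![c0, s0; -s0, c0] with hρ
    have hρ00 : ρ 0 0 = c0 := rfl
    have hρ01 : ρ 0 1 = s0 := rfl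
    have hρ10 : ρ 1 0 = -s0 := rfl
    have hρ11 : ρ 1 1 = c0 := rfl
    have hdρ : ρ.det = 1 := by
      rw [det_fin_two, hρ00, hρ01, hρ10, hρ11]
      linear_combination hc02 + hs02
    have hCρ : Cmat ρ = !![c0^2 - s0^2, -(2*(c0*s0)), 0; 2*(c0*s0), c0^2 - s0^2, 0; 0, 0, c0^2 + s0^2] := by
      rw [Cmat_eq, hρ]
      ext i j
      fin_cases i <;> fin_cases j <;> simp <;> ring
    have hNform := eta_fin_three N
    rw [hN02, hN12, hN22, hN20, hN21, hf, hd] at hNform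
    have hNρ : N = Cmat ρ := by
      rw [hNform, hCρ]
      ext i j
      fin_cases i <;> fin_cases j <;> simp <;>
        first
          | linear_combination hc02 - hs02
          | linear_combination hs02 - hc02
          | linear_combination h2cs
          | linear_combination -h2cs
          | linear_combination hc02 + hs02
          | linear_combination -hc02 - hs02
    have hdetρh : (ρ * h0).det = 1 := by rw [det_mul, hdρ, hdh0, one_mul]
    refine ⟨(ρ * h0)⁻¹, ?_, ?_⟩
    · rw [det_nonsing_inv, hdetρh, Ring.inverse_one]
    · rw [Lmat_eq_Cmat, nonsing_inv_nonsing_inv _ (by rw [hdetρh]; exact isUnit_one),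
        Cmat_mul, ← hNρ]
      exact hMN.symm
end

section
/- Let σ₋₁ = [[0,1],[1,0]]. The set {h ∈ GL(2,ℝ) : ᵗh⁻¹ σ₋₁ h⁻¹ ∈ ℝ·σ₋₁} equals the union of the invertible diagonal matrices and the invertible antidiagonal matrices (matrices of the form [[0,b],[c,0]] with bc ≠ 0), and its identity component (the connected component containing I) is H(σ₋₁) = {diag(a, c) : a > 0, c > 0}. -/
open Matrix

lemma key_iff (h : Matrix (Fin 2) (Fin 2) ℝ) (hu : IsUnit h)
    (σ : Matrix (Fin 2) (Fin 2) ℝ) :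
    (∃ c : ℝ, (hᵀ)⁻¹ * σ * h⁻¹ = c • σ) ↔ ∃ c : ℝ, σ = c • (hᵀ * σ * h) := by
  have hd : IsUnit h.det := (Matrix.isUnit_iff_isUnit_det h).mp hu
  have hdt : IsUnit hᵀ.det := by rwa [Matrix.det_transpose]
  constructor
  · rintro ⟨c, hc⟩
    refine ⟨c, ?_⟩
    have : hᵀ * ((hᵀ)⁻¹ * σ * h⁻¹) * h = hᵀ * (c • σ) * h := by rw [hc]
    calc σ = hᵀ * ((hᵀ)⁻¹ * σ * h⁻¹) * h := by
            rw [← Matrix.mul_assoc, ← Matrix.mul_assoc, Matrix.mul_nonsing_inv _ hdt,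
              Matrix.one_mul, Matrix.mul_assoc, Matrix.nonsing_inv_mul _ hd, Matrix.mul_one]
      _ = c • (hᵀ * σ * h) := by rw [this, Matrix.mul_smul, Matrix.smul_mul]
  · rintro ⟨c, hc⟩
    refine ⟨c, ?_⟩
    calc (hᵀ)⁻¹ * σ * h⁻¹ = (hᵀ)⁻¹ * (c • (hᵀ * σ * h)) * h⁻¹ := by rw [← hc]
      _ = c • ((hᵀ)⁻¹ * (hᵀ * σ * h) * h⁻¹) := by
          rw [Matrix.mul_smul, Matrix.smul_mul]
      _ = c • σ := by
          congr 1
          rw [← Matrix.mul_assoc, ← Matrix.mul_assoc, Matrix.nonsing_inv_mul _ hdt,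
            Matrix.one_mul, Matrix.mul_assoc, Matrix.mul_nonsing_inv _ hd, Matrix.mul_one]

/-- the set of h ∈ GL(2,ℝ) with ᵗh⁻¹σ₋₁h⁻¹ ∈ ℝ·σ₋₁ (σ₋₁ = [[0,1],[1,0]])
is the union of invertible diagonal and invertible antidiagonal matrices, whose identity
component is the positive diagonal group {diag(a,c) : a > 0, c > 0}. -/
theorem stmt14 :
    ({h : Matrix (Fin 2) (Fin 2) ℝ | IsUnit h ∧
        ∃ c : ℝ, (hᵀ)⁻¹ * !![(0 : ℝ), 1; 1, 0] * h⁻¹ = c • !![(0 : ℝ), 1; 1, 0]} =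
      {h : Matrix (Fin 2) (Fin 2) ℝ | IsUnit h ∧
        ((h 0 1 = 0 ∧ h 1 0 = 0) ∨ (h 0 0 = 0 ∧ h 1 1 = 0))}) ∧
    connectedComponentIn {h : Matrix (Fin 2) (Fin 2) ℝ | IsUnit h ∧
        ((h 0 1 = 0 ∧ h 1 0 = 0) ∨ (h 0 0 = 0 ∧ h 1 1 = 0))} 1 =
      {h : Matrix (Fin 2) (Fin 2) ℝ | 0 < h 0 0 ∧ 0 < h 1 1 ∧ h 0 1 = 0 ∧ h 1 0 = 0} := by
  set σ : Matrix (Fin 2) (Fin 2) ℝ := !![(0 : ℝ), 1; 1, 0] with hσ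
  set S : Set (Matrix (Fin 2) (Fin 2) ℝ) := {h | IsUnit h ∧
      ((h 0 1 = 0 ∧ h 1 0 = 0) ∨ (h 0 0 = 0 ∧ h 1 1 = 0))} with hS
  constructor
  · ext h
    simp only [Set.mem_setOf_eq, hS]
    constructor
    · rintro ⟨hu, hc⟩
      refine ⟨hu, ?_⟩
      rw [key_iff h hu σ] at hc
      obtain ⟨c, hc⟩ := hc
      have hdet : h.det ≠ 0 := by
        have := (Matrix.isUnit_iff_isUnit_det h).mp hu
        exact IsUnit.ne_zero this
      rw [Matrix.det_fin_two] at hdet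
      have e00 := congrFun (congrFun hc 0) 0
      have e01 := congrFun (congrFun hc 0) 1
      have e11 := congrFun (congrFun hc 1) 1
      simp [hσ, Matrix.mul_apply, Fin.sum_univ_two, Matrix.transpose_apply] at e00 e01 e11
      have hcne : c ≠ 0 := by
        intro h0
        rw [h0] at e01
        simp at e01
      have h1 : h 0 0 * h 1 0 = 0 := by
        rcases e00 with h' | h'
        · exact absurd h' hcne
        · linear_combination h' / 2
      have h2 : h 0 1 * h 1 1 = 0 := by
        rcases e11 with h' | h'
        · exact absurd h' hcne
        · linear_combination h' / 2
      rcases mul_eq_zero.mp h1 with h' | h'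
      · -- h 0 0 = 0 : antidiagonal
        right
        refine ⟨h', ?_⟩
        have : h 0 1 ≠ 0 := by
          intro hb; rw [h', hb] at hdet; simp at hdet
        rcases mul_eq_zero.mp h2 with h'' | h''
        · exact absurd h'' this
        · exact h''
      · -- h 1 0 = 0 : diagonal
        left
        refine ⟨?_, h'⟩
        have : h 1 1 ≠ 0 := by
          intro hd; rw [h', hd] at hdet; simp at hdet
        rcases mul_eq_zero.mp h2 with h'' | h''
        · exact h''
        · exact absurd h'' this
    · rintro ⟨hu, hcase⟩
      refine ⟨hu, ?_⟩
      rw [key_iff h hu σ]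
      have hdet : h.det ≠ 0 :=
        IsUnit.ne_zero ((Matrix.isUnit_iff_isUnit_det h).mp hu)
      rw [Matrix.det_fin_two] at hdet
      rcases hcase with ⟨hb, hc⟩ | ⟨ha, hd⟩
      · have hne : h 0 0 * h 1 1 ≠ 0 := by rw [hb, hc] at hdet; simpa using hdet
        have ha0 : h 0 0 ≠ 0 := left_ne_zero_of_mul hne
        have hd0 : h 1 1 ≠ 0 := right_ne_zero_of_mul hne
        refine ⟨(h 0 0 * h 1 1)⁻¹, ?_⟩
        ext i j
        fin_cases i <;> fin_cases j <;>
          simp [hσ, Matrix.mul_apply, Fin.sum_univ_two, Matrix.transpose_apply, hb, hc] <;>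
          field_simp [ha0, hd0] <;> ring
      · have hne : h 0 1 * h 1 0 ≠ 0 := by
          rw [ha, hd] at hdet; intro h0; apply hdet; linarith [h0]
        have hb0 : h 0 1 ≠ 0 := left_ne_zero_of_mul hne
        have hc0 : h 1 0 ≠ 0 := right_ne_zero_of_mul hne
        refine ⟨(h 0 1 * h 1 0)⁻¹, ?_⟩
        ext i j
        fin_cases i <;> fin_cases j <;>
          simp [hσ, Matrix.mul_apply, Fin.sum_univ_two, Matrix.transpose_apply, ha, hd] <;>
          field_simp [hb0, hc0] <;> ring
  · set P : Set (Matrix (Fin 2) (Fin 2) ℝ) :=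
      {h | 0 < h 0 0 ∧ 0 < h 1 1 ∧ h 0 1 = 0 ∧ h 1 0 = 0} with hP
    have cont : ∀ i j : Fin 2, Continuous fun h : Matrix (Fin 2) (Fin 2) ℝ => h i j :=
      fun i j => (continuous_apply j).comp (continuous_apply i)
    have hPS : P ⊆ S := by
      rintro x ⟨hx1, hx2, hx3, hx4⟩
      refine ⟨?_, Or.inl ⟨hx3, hx4⟩⟩
      rw [Matrix.isUnit_iff_isUnit_det, Matrix.det_fin_two, hx3, hx4, isUnit_iff_ne_zero]
      nlinarith
    have h1P : (1 : Matrix (Fin 2) (Fin 2) ℝ) ∈ P := by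
      refine ⟨?_, ?_, ?_, ?_⟩
      · rw [Matrix.one_apply_eq]; norm_num
      · rw [Matrix.one_apply_eq]; norm_num
      · exact Matrix.one_apply_ne (by decide)
      · exact Matrix.one_apply_ne (by decide)
    have h1S : (1 : Matrix (Fin 2) (Fin 2) ℝ) ∈ S := hPS h1P
    apply Set.Subset.antisymm
    · -- connectedComponentIn S 1 ⊆ P
      set U : Set (Matrix (Fin 2) (Fin 2) ℝ) := {h | 0 < h 0 0 ∧ 0 < h 1 1} with hU
      set V : Set (Matrix (Fin 2) (Fin 2) ℝ) :=
        {h | h 0 0 < 0} ∪ {h | h 1 1 < 0} ∪ {h | h 0 1 ≠ 0} ∪ {h | h 1 0 ≠ 0} with hV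
      have hUopen : IsOpen U :=
        (isOpen_lt continuous_const (cont 0 0)).inter (isOpen_lt continuous_const (cont 1 1))
      have hVopen : IsOpen V := by
        refine IsOpen.union (IsOpen.union (IsOpen.union ?_ ?_) ?_) ?_
        · exact isOpen_lt (cont 0 0) continuous_const
        · exact isOpen_lt (cont 1 1) continuous_const
        · exact isOpen_compl_singleton.preimage (cont 0 1)
        · exact isOpen_compl_singleton.preimage (cont 1 0)
      -- members of S are in U ∪ V
      have hSsub : S ⊆ U ∪ V := by
        rintro x ⟨hx, hcase⟩
        have hdet : x.det ≠ 0 :=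
          IsUnit.ne_zero ((Matrix.isUnit_iff_isUnit_det x).mp hx)
        rw [Matrix.det_fin_two] at hdet
        rcases hcase with ⟨hb, hc⟩ | ⟨ha, hd⟩
        · have hne : x 0 0 * x 1 1 ≠ 0 := by rw [hb, hc] at hdet; simpa using hdet
          have h00 : x 0 0 ≠ 0 := fun h0 => hne (by rw [h0]; ring)
          have h11 : x 1 1 ≠ 0 := fun h0 => hne (by rw [h0]; ring)
          rcases h00.lt_or_gt with hlt | hgt
          · right; left; left; left; exact hlt
          · rcases h11.lt_or_gt with hlt' | hgt'
            · right; left; left; right; exact hlt'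
            · left; exact ⟨hgt, hgt'⟩
        · have hne : x 0 1 ≠ 0 := by
            intro h0; apply hdet; rw [ha, h0]; ring
          right; left; right; exact hne
      -- S ∩ U ⊆ P, and P ∩ V = ∅
      have hSU : ∀ x ∈ S, x ∈ U → x ∈ P := by
        rintro x ⟨hx, hcase⟩ ⟨hu1, hu2⟩
        rcases hcase with ⟨hb, hc⟩ | ⟨ha, hd⟩
        · exact ⟨hu1, hu2, hb, hc⟩
        · rw [ha] at hu1; exact absurd hu1 (lt_irrefl 0)
      have hPV : ∀ x ∈ P, x ∉ V := by
        rintro x ⟨hx1, hx2, hx3, hx4⟩ hv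
        rcases hv with ((h' | h') | h') | h'
        · exact lt_asymm hx1 h'
        · exact lt_asymm hx2 h'
        · exact h' hx3
        · exact h' hx4
      intro x hx
      by_contra hxP
      have hxS : x ∈ S := connectedComponentIn_subset S 1 hx
      have hxV : x ∈ V := by
        rcases hSsub hxS with hxU | hxV
        · exact absurd (hSU x hxS hxU) hxP
        · exact hxV
      have h1mem : (1 : Matrix (Fin 2) (Fin 2) ℝ) ∈ connectedComponentIn S 1 :=
        mem_connectedComponentIn h1S
      obtain ⟨y, hyt, hyU, hyV⟩ :=
        isPreconnected_connectedComponentIn U V hUopen hVopen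
          (fun z hz => hSsub (connectedComponentIn_subset S 1 hz))
          ⟨1, h1mem, ⟨by rw [Matrix.one_apply_eq]; norm_num,
            by rw [Matrix.one_apply_eq]; norm_num⟩⟩
          ⟨x, hx, hxV⟩
      exact hPV y (hSU y (connectedComponentIn_subset S 1 hyt) hyU) hyV
    · -- P ⊆ connectedComponentIn S 1
      have hconv : Convex ℝ P := by
        rintro x ⟨hx1, hx2, hx3, hx4⟩ y ⟨hy1, hy2, hy3, hy4⟩ a b ha hb hab
        have key : ∀ p q : ℝ, 0 < p → 0 < q → 0 < a * p + b * q := by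
          intro p q hp hq
          rcases ha.lt_or_eq with h0 | h0
          · nlinarith [mul_pos h0 hp, mul_nonneg hb hq.le]
          · have hb1 : b = 1 := by linarith
            rw [← h0, hb1]; simpa using hq
        refine ⟨?_, ?_, ?_, ?_⟩
        · show 0 < (a • x + b • y) 0 0
          simp only [Matrix.add_apply, Matrix.smul_apply, smul_eq_mul]
          exact key _ _ hx1 hy1
        · show 0 < (a • x + b • y) 1 1
          simp only [Matrix.add_apply, Matrix.smul_apply, smul_eq_mul]
          exact key _ _ hx2 hy2
        · show (a • x + b • y) 0 1 = 0
          simp only [Matrix.add_apply, Matrix.smul_apply, smul_eq_mul, hx3, hy3]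
          ring
        · show (a • x + b • y) 1 0 = 0
          simp only [Matrix.add_apply, Matrix.smul_apply, smul_eq_mul, hx4, hy4]
          ring
      exact hconv.isPreconnected.subset_connectedComponentIn h1P hPS
end

section
/- Classification of lines in the conformal Lie algebra span{I, J} ⊆ M₂(ℝ), where J = [[0,−1],[1,0]]: for every one-dimensional subspace ℓ of span{I, J}, there exists a conformal matrix g ∈ GL(2,ℝ) (i.e., g ᵗg ∈ ℝ·I) such that g ℓ g⁻¹ is either ℝ·(I + αJ) for a unique α ≥ 0, or ℝ·J; moreover these representatives are pairwise inequivalent: no conformal g ∈ GL(2,ℝ) conjugates ℝ·(I+αJ) onto ℝ·(I+α′J) for α ≠ α′ with α, α′ ≥ 0, nor ℝ·(I+αJ) onto ℝ·J. -/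
open Matrix

noncomputable def Jm : Matrix (Fin 2) (Fin 2) ℝ := !![0, -1; 1, 0]

/-- g is conformal: invertible with g·ᵗg a scalar multiple of the identity. -/
def conformal (g : Matrix (Fin 2) (Fin 2) ℝ) : Prop :=
  IsUnit g ∧ ∃ c : ℝ, g * gᵀ = c • (1 : Matrix (Fin 2) (Fin 2) ℝ)

/-- The line ℝ·A in M₂(ℝ). -/
def line (A : Matrix (Fin 2) (Fin 2) ℝ) : Set (Matrix (Fin 2) (Fin 2) ℝ) :=
  {B | ∃ t : ℝ, B = t • A}

/-- Conjugation of a set of matrices by g. -/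
def mconj (g : Matrix (Fin 2) (Fin 2) ℝ) (S : Set (Matrix (Fin 2) (Fin 2) ℝ)) :
    Set (Matrix (Fin 2) (Fin 2) ℝ) :=
  (fun X => g * X * g⁻¹) '' S

lemma mconj_line (g : Matrix (Fin 2) (Fin 2) ℝ) (A : Matrix (Fin 2) (Fin 2) ℝ) :
    mconj g (line A) = line (g * A * g⁻¹) := by
  ext X
  constructor
  · rintro ⟨Y, ⟨t, rfl⟩, rfl⟩
    exact ⟨t, by simp [Matrix.mul_smul, Matrix.smul_mul]⟩
  · rintro ⟨t, rfl⟩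
    exact ⟨t • A, ⟨t, rfl⟩, by simp [Matrix.mul_smul, Matrix.smul_mul]⟩

lemma line_smul {c : ℝ} (hc : c ≠ 0) (A : Matrix (Fin 2) (Fin 2) ℝ) :
    line (c • A) = line A := by
  ext X
  constructor
  · rintro ⟨t, rfl⟩; exact ⟨t * c, by rw [smul_smul]⟩
  · rintro ⟨t, rfl⟩; exact ⟨t / c, by rw [smul_smul, div_mul_cancel₀ _ hc]⟩

lemma symplectic (g : Matrix (Fin 2) (Fin 2) ℝ) : g * Jm * gᵀ = g.det • Jm := by
  ext i j
  fin_cases i <;> fin_cases j <;>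
    simp [Jm, Matrix.mul_apply, Matrix.det_fin_two, Fin.sum_univ_two, Matrix.transpose_apply] <;>
    ring

lemma conj_J {g : Matrix (Fin 2) (Fin 2) ℝ} (hg : conformal g) :
    g * Jm * g⁻¹ = Jm ∨ g * Jm * g⁻¹ = -Jm := by
  obtain ⟨hu, c, hc⟩ := hg
  have hdet : IsUnit g.det := (Matrix.isUnit_iff_isUnit_det g).mp hu
  have hd : g.det ≠ 0 := by
    simpa [isUnit_iff_ne_zero] using hdet
  have hc2 : g.det * g.det = c * c := by
    rw [← sq, ← sq]
    have := congrArg Matrix.det hc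
    simpa [Matrix.det_smul, Matrix.det_fin_two, Matrix.det_transpose, Fin.prod_univ_two,
      Matrix.smul_apply, Matrix.one_apply, mul_comm, sq] using this
  have hcne : c ≠ 0 := by
    intro h; rw [h] at hc2; simp at hc2; exact hd (by nlinarith)
  -- gᵀ = c • g⁻¹
  have hginv : g⁻¹ = c⁻¹ • gᵀ := by
    have h1 : g * (c⁻¹ • gᵀ) = 1 := by
      rw [Matrix.mul_smul, hc, smul_smul, inv_mul_cancel₀ hcne, one_smul]
    exact (Matrix.inv_eq_right_inv h1)
  rw [hginv, _root_.Matrix.mul_smul, symplectic, smul_smul]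
  rcases mul_self_eq_mul_self_iff.mp hc2 with h | h
  · left; rw [h, inv_mul_cancel₀ hcne, one_smul]
  · right; rw [h]
    rw [show c⁻¹ * -c = -1 by field_simp]
    simp

lemma conj_one {g : Matrix (Fin 2) (Fin 2) ℝ} (hg : IsUnit g) :
    g * 1 * g⁻¹ = 1 := by
  rw [Matrix.mul_one, Matrix.mul_nonsing_inv g ((Matrix.isUnit_iff_isUnit_det g).mp hg)]

lemma conj_aff {g : Matrix (Fin 2) (Fin 2) ℝ} (hg : conformal g) (α : ℝ) :
    g * (1 + α • Jm) * g⁻¹ = 1 + α • Jm ∨ g * (1 + α • Jm) * g⁻¹ = 1 + (-α) • Jm := by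
  have expand : g * (1 + α • Jm) * g⁻¹ = g * 1 * g⁻¹ + α • (g * Jm * g⁻¹) := by
    rw [Matrix.mul_add, Matrix.add_mul, _root_.Matrix.mul_smul, Matrix.smul_mul]
  rcases conj_J hg with h | h
  · left; rw [expand, h, conj_one hg.1]
  · right; rw [expand, h, conj_one hg.1, smul_neg, neg_smul]

lemma line_aff_inj {α β : ℝ} (h : line (1 + α • Jm) = line (1 + β • Jm)) : α = β := by
  have hm : (1 + α • Jm) ∈ line (1 + β • Jm) := h ▸ ⟨1, (one_smul ℝ _).symm⟩
  obtain ⟨t, ht⟩ := hm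
  have h00 := congrFun (congrFun ht 0) 0
  have h10 := congrFun (congrFun ht 1) 0
  simp [Jm, Matrix.one_apply, Matrix.smul_apply, Matrix.add_apply] at h00 h10
  simpa [← h00] using h10

lemma line_aff_ne_J (α : ℝ) : line (1 + α • Jm) ≠ line Jm := by
  intro h
  have hm : (1 + α • Jm) ∈ line Jm := h ▸ ⟨1, (one_smul ℝ _).symm⟩
  obtain ⟨t, ht⟩ := hm
  have h00 := congrFun (congrFun ht 0) 0
  simp [Jm, Matrix.one_apply, Matrix.smul_apply, Matrix.add_apply] at h00

lemma Rconf : conformal (!![1, 0; 0, -1] : Matrix (Fin 2) (Fin 2) ℝ) := by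
  constructor
  · rw [Matrix.isUnit_iff_isUnit_det]
    simp [Matrix.det_fin_two_of]
  · refine ⟨1, ?_⟩
    have : (!![1, 0; 0, -1] : Matrix (Fin 2) (Fin 2) ℝ)ᵀ = !![1, 0; 0, -1] := by
      ext i j; fin_cases i <;> fin_cases j <;> simp
    rw [this]
    ext i j
    fin_cases i <;> fin_cases j <;>
      simp [Matrix.mul_apply, Fin.sum_univ_two, Matrix.one_apply, Matrix.transpose_apply]

lemma Rflip : (!![1, 0; 0, -1] : Matrix (Fin 2) (Fin 2) ℝ) * Jm *
    (!![1, 0; 0, -1] : Matrix (Fin 2) (Fin 2) ℝ)⁻¹ = -Jm := by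
  have hinv : (!![1, 0; 0, -1] : Matrix (Fin 2) (Fin 2) ℝ)⁻¹ = !![1, 0; 0, -1] := by
    apply Matrix.inv_eq_right_inv
    ext i j
    fin_cases i <;> fin_cases j <;>
      simp [Matrix.mul_apply, Fin.sum_univ_two, Matrix.one_apply]
  rw [hinv]
  ext i j
  fin_cases i <;> fin_cases j <;>
    simp [Jm, Matrix.mul_apply, Fin.sum_univ_two]

lemma mconj_line_one (S : Set (Matrix (Fin 2) (Fin 2) ℝ)) : mconj 1 S = S := by
  simp [mconj]

/-- every line in span{I,J} is conjugate, by some conformal matrix, to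
ℝ·(I+αJ) with α ≥ 0 or to ℝ·J, and these representatives are pairwise inequivalent
under conformal conjugation. -/
theorem stmt15 :
    (∀ ℓ : Submodule ℝ (Matrix (Fin 2) (Fin 2) ℝ),
      ℓ ≤ Submodule.span ℝ {(1 : Matrix (Fin 2) (Fin 2) ℝ), Jm} →
      Module.finrank ℝ ℓ = 1 →
      ∃ g : Matrix (Fin 2) (Fin 2) ℝ, conformal g ∧
        ((∃ α : ℝ, 0 ≤ α ∧ mconj g (ℓ : Set (Matrix (Fin 2) (Fin 2) ℝ)) = line (1 + α • Jm)) ∨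
          mconj g (ℓ : Set (Matrix (Fin 2) (Fin 2) ℝ)) = line Jm)) ∧
    (∀ α α' : ℝ, 0 ≤ α → 0 ≤ α' → α ≠ α' → ∀ g : Matrix (Fin 2) (Fin 2) ℝ, conformal g →
      mconj g (line (1 + α • Jm)) ≠ line (1 + α' • Jm)) ∧
    (∀ α : ℝ, 0 ≤ α → ∀ g : Matrix (Fin 2) (Fin 2) ℝ, conformal g →
      mconj g (line (1 + α • Jm)) ≠ line Jm) := by
  have hconf1 : conformal 1 := ⟨isUnit_one, 1, by simp⟩
  refine ⟨?_, ?_, ?_⟩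
  · intro ℓ hle hrk
    obtain ⟨v, hv0, hv⟩ := finrank_eq_one_iff'.mp hrk
    have hset : (ℓ : Set (Matrix (Fin 2) (Fin 2) ℝ)) = line (v : Matrix (Fin 2) (Fin 2) ℝ) := by
      ext x
      constructor
      · intro hx
        obtain ⟨c, hc⟩ := hv ⟨x, hx⟩
        exact ⟨c, by simpa using congrArg Subtype.val hc.symm⟩
      · rintro ⟨t, rfl⟩
        exact ℓ.smul_mem t v.2
    have hvne : (v : Matrix (Fin 2) (Fin 2) ℝ) ≠ 0 := by
      intro h
      exact hv0 (Subtype.ext h)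
    obtain ⟨a, b, hab⟩ := Submodule.mem_span_pair.mp (hle v.2)
    by_cases ha : a = 0
    · -- v = b • Jm
      have hb : b ≠ 0 := by
        intro hb; apply hvne; rw [← hab, ha, hb]; simp
      refine ⟨1, hconf1, Or.inr ?_⟩
      rw [mconj_line_one, hset, ← hab, ha]
      simpa using line_smul hb Jm
    · have hv' : (v : Matrix (Fin 2) (Fin 2) ℝ) = a • (1 + (b / a) • Jm) := by
        rw [← hab, smul_add, smul_smul, mul_div_cancel₀ _ ha]
      have hlv : line (v : Matrix (Fin 2) (Fin 2) ℝ) = line (1 + (b / a) • Jm) := by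
        rw [hv', line_smul ha]
      by_cases hba : 0 ≤ b / a
      · exact ⟨1, hconf1, Or.inl ⟨b / a, hba, by rw [mconj_line_one, hset, hlv]⟩⟩
      · refine ⟨!![1, 0; 0, -1], Rconf, Or.inl ⟨-(b / a), by linarith, ?_⟩⟩
        rw [hset, hlv, mconj_line]
        have : (!![1, 0; 0, -1] : Matrix (Fin 2) (Fin 2) ℝ) * (1 + (b / a) • Jm) *
            (!![1, 0; 0, -1] : Matrix (Fin 2) (Fin 2) ℝ)⁻¹ = 1 + (-(b / a)) • Jm := by
          rw [Matrix.mul_add, Matrix.add_mul, _root_.Matrix.mul_smul,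
            Matrix.smul_mul, Rflip, conj_one Rconf.1, smul_neg, neg_smul]
        rw [this]
  · intro α α' hα hα' hne g hg h
    rw [mconj_line] at h
    rcases conj_aff hg α with hc | hc <;> rw [hc] at h <;> have := line_aff_inj h
    · exact hne this
    · apply hne; linarith
  · intro α hα g hg h
    rw [mconj_line] at h
    rcases conj_aff hg α with hc | hc <;> rw [hc] at h
    · exact line_aff_ne_J α h
    · exact line_aff_ne_J (-α) h
end

section
/- A two-dimensional linear subspace P of the space of lower triangular 2×2 real matrices is closed under the commutator bracket [A,B] = AB − BA (i.e., is a Lie subalgebra) if and only if P contains the identity matrix I or P contains the matrix unit E₂₁ (the matrix with 1 in position (2,1) and 0 elsewhere). -/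
open Matrix

private lemma mat_ext (A B : Matrix (Fin 2) (Fin 2) ℝ)
    (h00 : A 0 0 = B 0 0) (h01 : A 0 1 = B 0 1) (h10 : A 1 0 = B 1 0) (h11 : A 1 1 = B 1 1) :
    A = B := by
  ext i j; fin_cases i <;> fin_cases j <;> assumption

private lemma brak (A B : Matrix (Fin 2) (Fin 2) ℝ) (hA : A 0 1 = 0) (hB : B 0 1 = 0) :
    A * B - B * A =
      (A 1 0 * (B 0 0 - B 1 1) - B 1 0 * (A 0 0 - A 1 1)) • !![0, 0; 1, 0] := by
  apply mat_ext <;>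
    simp [Matrix.mul_apply, Fin.sum_univ_two, hA, hB] <;> ring

private lemma span_eq_of (P : Submodule ℝ (Matrix (Fin 2) (Fin 2) ℝ))
    (X Y : Matrix (Fin 2) (Fin 2) ℝ)
    (hle : P ≤ Submodule.span ℝ {X, Y})
    (hind : LinearIndependent ℝ ![X, Y])
    (hdim : Module.finrank ℝ P = 2) :
    P = Submodule.span ℝ {X, Y} := by
  apply Submodule.eq_of_le_of_finrank_le hle
  have hr : ({X, Y} : Set (Matrix (Fin 2) (Fin 2) ℝ)) = Set.range ![X, Y] := by
    ext z
    simp [Fin.exists_fin_two, or_comm]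
  rw [hdim, hr, finrank_span_eq_card hind]
  simp

/-- a 2-dimensional subspace of the lower triangular 2×2 real matrices is
closed under the commutator bracket iff it contains I or the matrix unit E₂₁. -/
theorem stmt17 (P : Submodule ℝ (Matrix (Fin 2) (Fin 2) ℝ))
    (hlow : ∀ A ∈ P, A 0 1 = 0) (hdim : Module.finrank ℝ P = 2) :
    (∀ A ∈ P, ∀ B ∈ P, A * B - B * A ∈ P) ↔
      ((1 : Matrix (Fin 2) (Fin 2) ℝ) ∈ P ∨ (!![0, 0; 1, 0] : Matrix (Fin 2) (Fin 2) ℝ) ∈ P) := by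
  constructor
  · intro hcl
    by_cases hE : (!![0, 0; 1, 0] : Matrix (Fin 2) (Fin 2) ℝ) ∈ P
    · exact Or.inr hE
    left
    have hc : ∀ A ∈ P, ∀ B ∈ P,
        A 1 0 * (B 0 0 - B 1 1) - B 1 0 * (A 0 0 - A 1 1) = 0 := by
      intro A hA B hB
      by_contra h
      apply hE
      have hm := hcl A hA B hB
      rw [brak A B (hlow A hA) (hlow B hB)] at hm
      have h2 := P.smul_mem (A 1 0 * (B 0 0 - B 1 1) - B 1 0 * (A 0 0 - A 1 1))⁻¹ hm
      rwa [inv_smul_smul₀ h] at h2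
    by_cases hphi : ∀ A ∈ P, A 1 0 = 0
    · -- diagonal case
      have hPeq : P = Submodule.span ℝ {(!![1,0;0,0] : Matrix (Fin 2) (Fin 2) ℝ), !![0,0;0,1]} := by
        apply span_eq_of P _ _ _ _ hdim
        · intro A hA
          rw [Submodule.mem_span_pair]
          refine ⟨A 0 0, A 1 1, ?_⟩
          apply mat_ext <;> simp [hlow A hA, hphi A hA]
        · rw [LinearIndependent.pair_iff]
          intro s t hst
          constructor
          · have := congrFun (congrFun hst 0) 0; simpa using this
          · have := congrFun (congrFun hst 1) 1; simpa using this
      rw [hPeq, Submodule.mem_span_pair]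
      exact ⟨1, 1, by apply mat_ext <;> simp [Matrix.one_apply]⟩
    · push_neg at hphi
      obtain ⟨A0, hA0P, hA0⟩ := hphi
      set l : ℝ := (A0 0 0 - A0 1 1) / (A0 1 0) with hl
      have hkey : ∀ B ∈ P, B 0 0 - B 1 1 = l * B 1 0 := by
        intro B hB
        have h := hc A0 hA0P B hB
        rw [hl]
        field_simp
        linear_combination h
      have hPeq : P = Submodule.span ℝ {(1 : Matrix (Fin 2) (Fin 2) ℝ), !![l,0;1,0]} := by
        apply span_eq_of P _ _ _ _ hdim
        · intro B hB
          rw [Submodule.mem_span_pair]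
          refine ⟨B 1 1, B 1 0, ?_⟩
          apply mat_ext <;>
            simp [Matrix.one_apply, hlow B hB] <;> linarith [hkey B hB]
        · rw [LinearIndependent.pair_iff]
          intro s t hst
          have ht : t = 0 := by
            have := congrFun (congrFun hst 1) 0; simpa [Matrix.one_apply] using this
          have hs : s = 0 := by
            have := congrFun (congrFun hst 1) 1; simpa [Matrix.one_apply] using this
          exact ⟨hs, ht⟩
      rw [hPeq, Submodule.mem_span_pair]
      exact ⟨1, 0, by simp⟩
  · rintro (hI | hE) A hA B hB
    · rw [brak A B (hlow A hA) (hlow B hB)]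
      have hdep : ¬ LinearIndependent ℝ ![(⟨1, hI⟩ : P), ⟨A, hA⟩, ⟨B, hB⟩] := by
        intro h
        have := h.fintype_card_le_finrank
        rw [hdim] at this
        simp at this
      rw [Fintype.not_linearIndependent_iff] at hdep
      obtain ⟨g, hg, i, hi⟩ := hdep
      have hg' : g 0 • (1 : Matrix (Fin 2) (Fin 2) ℝ) + g 1 • A + g 2 • B = 0 := by
        have := congrArg (fun x : P => (x : Matrix (Fin 2) (Fin 2) ℝ)) hg
        simpa [Fin.sum_univ_three] using this
      have e10 : g 1 * A 1 0 + g 2 * B 1 0 = 0 := by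
        have := congrFun (congrFun hg' 1) 0
        simpa [Matrix.one_apply] using this
      have e00 : g 0 + g 1 * A 0 0 + g 2 * B 0 0 = 0 := by
        have := congrFun (congrFun hg' 0) 0
        simpa [Matrix.one_apply] using this
      have e11 : g 0 + g 1 * A 1 1 + g 2 * B 1 1 = 0 := by
        have := congrFun (congrFun hg' 1) 1
        simpa [Matrix.one_apply] using this
      have hpsi : g 1 * (A 0 0 - A 1 1) + g 2 * (B 0 0 - B 1 1) = 0 := by linarith
      have hcoef : A 1 0 * (B 0 0 - B 1 1) - B 1 0 * (A 0 0 - A 1 1) = 0 := by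
        by_cases h1 : g 1 = 0
        · by_cases h2 : g 2 = 0
          · exfalso
            have h0 : g 0 = 0 := by
              rw [h1, h2] at e00; linarith
            fin_cases i <;> simp_all
          · have hz : (A 1 0 * (B 0 0 - B 1 1) - B 1 0 * (A 0 0 - A 1 1)) * g 2 = 0 := by
              linear_combination A 1 0 * hpsi - (A 0 0 - A 1 1) * e10
            exact (mul_eq_zero.mp hz).resolve_right h2
        · have hz : (A 1 0 * (B 0 0 - B 1 1) - B 1 0 * (A 0 0 - A 1 1)) * g 1 = 0 := by
            linear_combination (B 0 0 - B 1 1) * e10 - B 1 0 * hpsi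
          exact (mul_eq_zero.mp hz).resolve_right h1
      rw [hcoef, zero_smul]
      exact P.zero_mem
    · rw [brak A B (hlow A hA) (hlow B hB)]
      exact P.smul_mem _ hE
end
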